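/- Let m ≥ n ≥ 1 and let c_1, …, c_n ∈ ℝ^m be linearly independent vectors whose Gram–Schmidt orthogonalization c*_1, …, c*_n satisfies the LLL reducedness conditions: |μ_{ij}| ≤ 1/2 for all 1 ≤ j < i ≤ n, and ‖c*_i‖₂² ≥ ½‖c*_{i−1}‖₂² for all 1 < i ≤ n. Let t′ ∈ ℝ^m be such that for every i ∈ {1,…,n} the coefficient x*_i = ⟨t′, c*_i⟩/⟨c*_i, c*_i⟩ lies in (−1/2, 1/2]. If z ∈ ℤ^n is such that ‖Σ_i z_i c_i − t′‖₂ ≤ ‖Σ_i y_i c_i − t′‖₂ for every y ∈ ℤ^n, then for every i ∈ {1, …, n} one has |z_{n−i+1}| ≤ 2^{n·i}. -/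

import Mathlib

open scoped RealInnerProductSpace

/-- The Gram–Schmidt orthogonalization of a family of vectors indexed by `Fin n`
(instances given explicitly to aid elaboration). -/
noncomputable def gso {m n : ℕ} (c : Fin n → EuclideanSpace ℝ (Fin m)) :
    Fin n → EuclideanSpace ℝ (Fin m) :=
  @InnerProductSpace.gramSchmidt ℝ _ _ _ _ (Fin n) Fin.instLinearOrder (Fin.instLocallyFiniteOrderBot n)
    IsWellOrder.toIsWellFounded c

section aux

theorem gso_orthogonal {m n : ℕ} (c : Fin n → EuclideanSpace ℝ (Fin m)) {i j : Fin n}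
    (h : i ≠ j) : ⟪gso c i, gso c j⟫ = 0 :=
  @InnerProductSpace.gramSchmidt_orthogonal ℝ _ _ _ _ (Fin n) Fin.instLinearOrder (Fin.instLocallyFiniteOrderBot n)
    IsWellOrder.toIsWellFounded c _ _ h

theorem gso_ne_zero {m n : ℕ} {c : Fin n → EuclideanSpace ℝ (Fin m)}
    (hc : LinearIndependent ℝ c) (i : Fin n) : gso c i ≠ 0 :=
  @InnerProductSpace.gramSchmidt_ne_zero ℝ _ _ _ _ (Fin n) Fin.instLinearOrder (Fin.instLocallyFiniteOrderBot n)
    IsWellOrder.toIsWellFounded c i hc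

theorem gso_decomp {m n : ℕ} (c : Fin n → EuclideanSpace ℝ (Fin m)) (i : Fin n) :
    c i = gso c i + ∑ j ∈ Finset.Iio i,
      (⟪c i, gso c j⟫ / ⟪gso c j, gso c j⟫) • gso c j := by
  have h := @InnerProductSpace.gramSchmidt_def'' ℝ _ _ _ _ (Fin n) Fin.instLinearOrder
    (Fin.instLocallyFiniteOrderBot n) IsWellOrder.toIsWellFounded c i
  refine h.trans ?_
  congr 1
  refine Finset.sum_congr rfl fun j _ => ?_
  congr 1
  rw [real_inner_comm, real_inner_self_eq_norm_sq]
  norm_num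
  rfl

/-- nearest-plane rounding keeping coordinates above `j0` equal to `z`. -/
noncomputable def npAux {n : ℕ} (μ : Fin n → Fin n → ℝ) (x : Fin n → ℝ) (z : Fin n → ℤ)
    (j0 : Fin n) : Fin n → ℤ
  | i =>
    if j0 < i then z i
    else round (x i - ∑ k ∈ (Finset.Ioi i).attach, ((npAux μ x z j0 k : ℝ) * μ k i))
  termination_by i => n - (i : ℕ)
  decreasing_by
    have := Finset.mem_Ioi.mp k.2
    have : (i : ℕ) < (k : ℕ) := this
    omega

theorem npAux_of_gt {n : ℕ} (μ : Fin n → Fin n → ℝ) (x : Fin n → ℝ) (z : Fin n → ℤ)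
    {j0 i : Fin n} (h : j0 < i) : npAux μ x z j0 i = z i := by
  rw [npAux, if_pos h]

theorem npAux_of_le {n : ℕ} (μ : Fin n → Fin n → ℝ) (x : Fin n → ℝ) (z : Fin n → ℤ)
    {j0 i : Fin n} (h : i ≤ j0) :
    npAux μ x z j0 i
      = round (x i - ∑ k ∈ Finset.Ioi i, ((npAux μ x z j0 k : ℝ) * μ k i)) := by
  rw [npAux, if_neg (not_lt.mpr h),
    Finset.sum_attach (Finset.Ioi i) (fun k => ((npAux μ x z j0 k : ℝ) * μ k i))]

/-- swap a triangular double sum -/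
theorem sum_Iio_comm {n : ℕ} {E : Type*} [AddCommMonoid E] (F : Fin n → Fin n → E) :
    ∑ i : Fin n, ∑ j ∈ Finset.Iio i, F i j = ∑ j : Fin n, ∑ i ∈ Finset.Ioi j, F i j := by
  classical
  have h1 : ∀ i : Fin n, Finset.Iio i = Finset.univ.filter (fun j => j < i) := by
    intro i; ext k; simp
  have h2 : ∀ j : Fin n, Finset.Ioi j = Finset.univ.filter (fun i => j < i) := by
    intro j; ext k; simp
  calc ∑ i : Fin n, ∑ j ∈ Finset.Iio i, F i j
      = ∑ i : Fin n, ∑ j : Fin n, if j < i then F i j else 0 := by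
        refine Finset.sum_congr rfl fun i _ => ?_
        rw [h1 i, Finset.sum_filter]
    _ = ∑ j : Fin n, ∑ i : Fin n, if j < i then F i j else 0 := Finset.sum_comm
    _ = ∑ j : Fin n, ∑ i ∈ Finset.Ioi j, F i j := by
        refine Finset.sum_congr rfl fun j _ => ?_
        rw [h2 j, Finset.sum_filter]

theorem sumgeo {n : ℕ} (hn : 1 ≤ n) :
    ∀ i : ℕ, (∑ k ∈ Finset.Icc 1 i, (2:ℝ)^(n*k)) ≤ 2^(n*i+1) - 2 := by
  intro i
  induction i with
  | zero => simp
  | succ i ih =>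
      rw [show Finset.Icc 1 (i+1) = insert (i+1) (Finset.Icc 1 i) by
        ext t; simp [Finset.mem_Icc]; omega]
      rw [Finset.sum_insert (by simp)]
      have h1 : (2:ℝ)^(n*i+1) ≤ 2^(n*(i+1)) := by
        apply pow_le_pow_right₀ one_le_two; nlinarith
      have h2 : (2:ℝ)^(n*(i+1)+1) = 2^(n*(i+1)) + 2^(n*(i+1)) := by ring
      linarith

end aux

set_option maxHeartbeats 2000000

/-- Under the LLL-reducedness conditions (`|μ_{ij}| ≤ 1/2` for `j < i`,
`‖c*_i‖² ≥ ½‖c*_{i−1}‖²`) and the hypothesis that the target `t'` has all Gram–Schmidt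
coefficients in `(−1/2, 1/2]`, the coefficients of a closest lattice point to `t'` in the
Euclidean norm satisfy the per-coordinate bound `|z_{n−i+1}| ≤ 2^{n·i}` for every
`1 ≤ i ≤ n` (with 1-based indexing, so `z ⟨n - i, _⟩` is the `(n−i+1)`-st coordinate). -/
theorem stmt_5 (m n : ℕ) (hn : 1 ≤ n) (hmn : n ≤ m)
    (c : Fin n → EuclideanSpace ℝ (Fin m)) (hc : LinearIndependent ℝ c)
    (hμ : ∀ i j : Fin n, j < i →
      abs (⟪c i, gso c j⟫ / ⟪gso c j, gso c j⟫) ≤ 1 / 2)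
    (hred : ∀ i j : Fin n, (j : ℕ) + 1 = (i : ℕ) →
      ‖gso c i‖ ^ 2 ≥ (1 / 2) * ‖gso c j‖ ^ 2)
    (t' : EuclideanSpace ℝ (Fin m))
    (ht' : ∀ i : Fin n,
      ⟪t', gso c i⟫ / ⟪gso c i, gso c i⟫ ∈ Set.Ioc (-(1/2) : ℝ) (1/2))
    (z : Fin n → ℤ)
    (hz : ∀ y : Fin n → ℤ,
      ‖(∑ i, (z i : ℝ) • c i) - t'‖ ≤ ‖(∑ i, (y i : ℝ) • c i) - t'‖) :
    ∀ i : ℕ, ∀ _hi : 1 ≤ i, ∀ _hin : i ≤ n,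
      |z ⟨n - i, by omega⟩| ≤ (2 : ℤ) ^ (n * i) := by
  classical
  set g : Fin n → EuclideanSpace ℝ (Fin m) := gso c with hg
  set μ : Fin n → Fin n → ℝ := fun i j => ⟪c i, gso c j⟫ / ⟪gso c j, gso c j⟫ with hμdef
  set x : Fin n → ℝ := fun j => ⟪t', gso c j⟫ / ⟪gso c j, gso c j⟫ with hxdef
  set G : Fin n → ℝ := fun j => ‖gso c j‖ ^ 2 with hGdef
  set A : (Fin n → ℝ) → Fin n → ℝ :=
    fun b j => b j + ∑ i ∈ Finset.Ioi j, b i * μ i j with hAdef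
  have hGpos : ∀ j, 0 < G j := by
    intro j
    have h := gso_ne_zero hc j
    have : 0 < ‖gso c j‖ := norm_pos_iff.mpr h
    positivity
  have hinner_self : ∀ j, ⟪g j, g j⟫ = G j := fun j => real_inner_self_eq_norm_sq _
  have horth : ∀ {i j : Fin n}, i ≠ j → ⟪g i, g j⟫ = 0 := fun h => gso_orthogonal c h
  have hxval : ∀ j, ⟪g j, t'⟫ = x j * G j := by
    intro j
    rw [real_inner_comm]
    have : x j = ⟪t', g j⟫ / G j := by rw [hxdef, ← hinner_self]
    rw [this]
    exact (div_mul_cancel₀ _ (hGpos j).ne').symm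
  -- representation of lattice vectors in the GS basis
  have repr : ∀ b : Fin n → ℝ, ∑ i, b i • c i = ∑ j, A b j • g j := by
    intro b
    have hdec : ∀ i, c i = g i + ∑ j ∈ Finset.Iio i, μ i j • g j := fun i => gso_decomp c i
    calc ∑ i, b i • c i
        = ∑ i, (b i • g i + ∑ j ∈ Finset.Iio i, (b i * μ i j) • g j) := by
          refine Finset.sum_congr rfl fun i _ => ?_
          rw [hdec i, smul_add, Finset.smul_sum]
          congr 1
          refine Finset.sum_congr rfl fun j _ => ?_
          rw [smul_smul]
      _ = (∑ i, b i • g i) + ∑ i, ∑ j ∈ Finset.Iio i, (b i * μ i j) • g j :=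
          Finset.sum_add_distrib
      _ = (∑ i, b i • g i) + ∑ j, ∑ i ∈ Finset.Ioi j, (b i * μ i j) • g j := by
          rw [sum_Iio_comm]
      _ = ∑ j, (b j • g j + (∑ i ∈ Finset.Ioi j, b i * μ i j) • g j) := by
          rw [← Finset.sum_add_distrib]
          refine Finset.sum_congr rfl fun j _ => ?_
          rw [Finset.sum_smul]
      _ = ∑ j, A b j • g j := by
          refine Finset.sum_congr rfl fun j _ => ?_
          rw [hAdef]
          simp only
          rw [add_smul]
  -- norm expansion
  have normexp : ∀ b : Fin n → ℝ,
      ‖(∑ j, b j • g j) - t'‖^2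
        = ∑ j, (b j - x j)^2 * G j + (‖t'‖^2 - ∑ j, (x j)^2 * G j) := by
    intro b
    have hns : ‖∑ j, b j • g j‖^2 = ∑ j, (b j)^2 * G j := by
      rw [← real_inner_self_eq_norm_sq, sum_inner]
      refine Finset.sum_congr rfl fun j _ => ?_
      rw [real_inner_smul_left, inner_sum, Finset.sum_eq_single j]
      · rw [real_inner_smul_right, hinner_self]; ring
      · intro k _ hk
        rw [real_inner_smul_right, horth hk.symm, mul_zero]
      · intro h; exact absurd (Finset.mem_univ j) h
    have hit : ⟪∑ j, b j • g j, t'⟫ = ∑ j, b j * (x j * G j) := by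
      rw [sum_inner]
      refine Finset.sum_congr rfl fun j _ => ?_
      rw [real_inner_smul_left, hxval]
    have e : ∀ j : Fin n, (b j - x j)^2 * G j
        = (b j)^2*G j - 2*(b j*(x j*G j)) + (x j)^2*G j := fun j => by ring
    have hexp : ∑ j, (b j - x j)^2 * G j
        = (∑ j, (b j)^2 * G j) - 2 * (∑ j, b j * (x j * G j)) + ∑ j, (x j)^2 * G j := by
      simp_rw [e]
      rw [Finset.sum_add_distrib, Finset.sum_sub_distrib, ← Finset.mul_sum]
    rw [norm_sub_sq_real, hns, hit]
    linarith [hexp]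
  set zr : Fin n → ℝ := fun i => (z i : ℝ) with hzr
  have key : ∀ y : Fin n → ℤ,
      ∑ j, (A zr j - x j)^2 * G j ≤ ∑ j, (A (fun i => (y i : ℝ)) j - x j)^2 * G j := by
    intro y
    have h1 := hz y
    have h2 : ‖(∑ i, (z i : ℝ) • c i) - t'‖^2 ≤ ‖(∑ i, (y i : ℝ) • c i) - t'‖^2 :=
      pow_le_pow_left₀ (norm_nonneg _) h1 2
    rw [repr zr, repr (fun i => (y i : ℝ)), normexp, normexp] at h2
    linarith
  -- growth of the squared norms
  have Gmono : ∀ (a b : Fin n), a ≤ b → G a ≤ 2^((b:ℕ) - (a:ℕ)) * G b := by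
    intro a b hab
    have claim : ∀ k : ℕ, (a:ℕ) ≤ k → ∀ hk : k < n, G a ≤ 2^(k - (a:ℕ)) * G ⟨k, hk⟩ := by
      intro k hk1
      induction k, hk1 using Nat.le_induction with
      | base =>
          intro hk
          have heq : (⟨(a:ℕ), hk⟩ : Fin n) = a := Fin.ext rfl
          rw [heq, Nat.sub_self, pow_zero, one_mul]
      | succ k hk ih =>
          intro hk1
          have hkn : k < n := by omega
          have h1 := ih hkn
          have h2 := hred ⟨k+1, hk1⟩ ⟨k, hkn⟩ rfl
          have h3 : G ⟨k, hkn⟩ ≤ 2 * G ⟨k+1, hk1⟩ := by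
            simp only [hGdef]
            simp only [← hg]
            linarith
          have hp : (0:ℝ) ≤ 2^(k - (a:ℕ)) := by positivity
          calc G a ≤ 2^(k - (a:ℕ)) * G ⟨k, hkn⟩ := h1
            _ ≤ 2^(k - (a:ℕ)) * (2 * G ⟨k+1, hk1⟩) := by
                exact mul_le_mul_of_nonneg_left h3 hp
            _ = 2^(k + 1 - (a:ℕ)) * G ⟨k+1, hk1⟩ := by
                rw [show k+1-(a:ℕ) = (k-(a:ℕ))+1 by omega, pow_succ]; ring
    have h := claim (b:ℕ) hab b.isLt
    have hb : (⟨(b:ℕ), b.isLt⟩ : Fin n) = b := Fin.ext rfl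
    rwa [hb] at h
  -- the per-coordinate bound on the GS coefficients of the closest vector
  have coefbound : ∀ j0 : Fin n, |A zr j0 - x j0| ≤ 2^n := by
    intro j0
    set y : Fin n → ℤ := npAux μ x z j0 with hydef
    set yr : Fin n → ℝ := fun i => (y i : ℝ) with hyrdef
    have hyz : ∀ k, j0 < k → y k = z k := fun k hk => npAux_of_gt μ x z hk
    have hAhigh : ∀ j, j0 < j → A yr j = A zr j := by
      intro j hj
      have h1 : yr j = zr j := by simp [hyrdef, hzr, hyz j hj]
      have h2 : ∀ k ∈ Finset.Ioi j, yr k * μ k j = zr k * μ k j := fun k hk => by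
        simp [hyrdef, hzr, hyz k (lt_trans hj (Finset.mem_Ioi.mp hk))]
      simp only [hAdef]
      rw [h1, Finset.sum_congr rfl h2]
    have hAlow : ∀ j, j ≤ j0 → |A yr j - x j| ≤ 1/2 := by
      intro j hj
      have hy0 := npAux_of_le μ x z (j0 := j0) hj
      rw [← hydef] at hy0
      set s := x j - ∑ k ∈ Finset.Ioi j, ((y k : ℝ)) * μ k j with hs
      have he : A yr j - x j = (round s : ℝ) - s := by
        simp only [hAdef, hyrdef]
        rw [hy0, hs]; ring
      rw [he, abs_sub_comm]
      exact abs_sub_round s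
    have hk := key y
    rw [← hyrdef] at hk
    have hU : (Finset.univ : Finset (Fin n)) = Finset.Iic j0 ∪ Finset.Ioi j0 := by
      ext k; simp [le_or_gt]
    have hD : Disjoint (Finset.Iic j0) (Finset.Ioi j0) :=
      Finset.disjoint_left.mpr fun a ha hb =>
        absurd (Finset.mem_Iic.mp ha) (not_le.mpr (Finset.mem_Ioi.mp hb))
    have hsplit : ∀ F : Fin n → ℝ,
        ∑ j, F j = ∑ j ∈ Finset.Iic j0, F j + ∑ j ∈ Finset.Ioi j0, F j := by
      intro F; rw [hU, Finset.sum_union hD]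
    rw [hsplit (fun j => (A zr j - x j)^2 * G j),
        hsplit (fun j => (A yr j - x j)^2 * G j)] at hk
    have hIoiEq : ∑ j ∈ Finset.Ioi j0, (A yr j - x j)^2 * G j
        = ∑ j ∈ Finset.Ioi j0, (A zr j - x j)^2 * G j :=
      Finset.sum_congr rfl fun j hj => by rw [hAhigh j (Finset.mem_Ioi.mp hj)]
    have hIic : ∑ j ∈ Finset.Iic j0, (A zr j - x j)^2 * G j
        ≤ ∑ j ∈ Finset.Iic j0, (A yr j - x j)^2 * G j := by
      linarith
    have hR : ∑ j ∈ Finset.Iic j0, (A yr j - x j)^2 * G j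
        ≤ ∑ j ∈ Finset.Iic j0, (1/4:ℝ) * (2^n * G j0) := by
      apply Finset.sum_le_sum
      intro j hj
      have hj' : j ≤ j0 := Finset.mem_Iic.mp hj
      have h1 : (A yr j - x j)^2 ≤ 1/4 := by
        have h := abs_le.mp (hAlow j hj')
        nlinarith [h.1, h.2]
      have h2 : G j ≤ 2^n * G j0 := by
        have hm := Gmono j j0 hj'
        have hle : (2:ℝ)^((j0:ℕ) - (j:ℕ)) ≤ 2^n :=
          pow_le_pow_right₀ one_le_two (by omega)
        nlinarith [hGpos j0]
      nlinarith [hGpos j, hGpos j0, sq_nonneg (A yr j - x j)]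
    have hterm : (A zr j0 - x j0)^2 * G j0
        ≤ ∑ j ∈ Finset.Iic j0, (A zr j - x j)^2 * G j := by
      exact Finset.single_le_sum (f := fun j => (A zr j - x j)^2 * G j)
        (fun j _ => mul_nonneg (sq_nonneg _) (hGpos j).le) (Finset.mem_Iic.mpr le_rfl)
    have hcard : ∑ j ∈ Finset.Iic j0, (1/4:ℝ) * (2^n * G j0)
        ≤ (n:ℝ) * ((1/4) * (2^n * G j0)) := by
      rw [Finset.sum_const, nsmul_eq_mul]
      have hc : (Finset.Iic j0).card ≤ n :=
        le_trans (Finset.card_le_univ _) (by simp)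
      have hpos : (0:ℝ) ≤ (1/4) * (2^n * G j0) := by positivity
      exact mul_le_mul_of_nonneg_right (by exact_mod_cast hc) hpos
    have hnle : (n:ℝ) ≤ 2^n := by exact_mod_cast (Nat.lt_two_pow_self (n := n)).le
    have hG := hGpos j0
    have hfinal : (A zr j0 - x j0)^2 ≤ ((2:ℝ)^n)^2 := by
      have hchain : (A zr j0 - x j0)^2 * G j0 ≤ (n:ℝ) * ((1/4) * (2^n * G j0)) :=
        le_trans hterm (le_trans hIic (le_trans hR hcard))
      have e1 : (n:ℝ) * (1/4 * (2^n * G j0)) ≤ 2^n * (1/4 * (2^n * G j0)) :=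
        mul_le_mul_of_nonneg_right hnle (by positivity)
      have e2 : (2:ℝ)^n * (1/4 * (2^n * G j0)) = 1/4 * (((2:ℝ)^n)^2 * G j0) := by ring
      have e3 : (0:ℝ) ≤ ((2:ℝ)^n)^2 * G j0 := by positivity
      have h4 : (A zr j0 - x j0)^2 * G j0 ≤ ((2:ℝ)^n)^2 * G j0 := by linarith
      exact le_of_mul_le_mul_right h4 hG
    exact abs_le_of_sq_le_sq hfinal (by positivity)
  -- the recursive bound on |z j0|
  have zbound : ∀ j0 : Fin n,
      (|z j0| : ℝ) ≤ 2^n + 1/2 + (1/2) * ∑ k ∈ Finset.Ioi j0, (|z k| : ℝ) := by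
    intro j0
    have hA : A zr j0 = zr j0 + ∑ k ∈ Finset.Ioi j0, zr k * μ k j0 := by rw [hAdef]
    have hx2 : |x j0| ≤ 1/2 := by
      have h := ht' j0
      exact abs_le.mpr ⟨h.1.le, h.2⟩
    have hS : |∑ k ∈ Finset.Ioi j0, zr k * μ k j0|
        ≤ (1/2) * ∑ k ∈ Finset.Ioi j0, (|z k| : ℝ) := by
      calc |∑ k ∈ Finset.Ioi j0, zr k * μ k j0|
          ≤ ∑ k ∈ Finset.Ioi j0, |zr k * μ k j0| := Finset.abs_sum_le_sum_abs _ _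
        _ ≤ ∑ k ∈ Finset.Ioi j0, (|z k| : ℝ) * (1/2) := by
            refine Finset.sum_le_sum fun k hk => ?_
            rw [abs_mul]
            have hμk : |μ k j0| ≤ 1/2 := hμ k j0 (Finset.mem_Ioi.mp hk)
            have hzz : |zr k| = ((|z k| : ℤ) : ℝ) := by
              simp [hzr, Int.cast_abs]
            rw [hzz]
            exact mul_le_mul_of_nonneg_left hμk (by positivity)
        _ = (1/2) * ∑ k ∈ Finset.Ioi j0, (|z k| : ℝ) := by
            rw [← Finset.sum_mul, mul_comm]
    have hid : zr j0 = (A zr j0 - x j0) + x j0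
        - ∑ k ∈ Finset.Ioi j0, zr k * μ k j0 := by rw [hA]; ring
    have htri : |zr j0| ≤ |A zr j0 - x j0| + |x j0|
        + |∑ k ∈ Finset.Ioi j0, zr k * μ k j0| := by
      rw [hid, sub_eq_add_neg]
      calc |(A zr j0 - x j0) + x j0 + -(∑ k ∈ Finset.Ioi j0, zr k * μ k j0)|
          ≤ |(A zr j0 - x j0) + x j0| + |-(∑ k ∈ Finset.Ioi j0, zr k * μ k j0)| :=
            abs_add_le _ _
        _ ≤ |A zr j0 - x j0| + |x j0| + |∑ k ∈ Finset.Ioi j0, zr k * μ k j0| := by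
            rw [abs_neg]
            exact add_le_add (abs_add_le _ _) le_rfl
    have hcast : (|z j0| : ℝ) = |zr j0| := by simp [hzr, Int.cast_abs]
    have hcb := coefbound j0
    rw [hcast]
    linarith
  -- the main induction
  have MAIN : ∀ i : ℕ, ∀ h1 : 1 ≤ i, ∀ h2 : i ≤ n,
      (|z ⟨n - i, by omega⟩| ≤ (2:ℤ)^(n*i)) ∧
      ((∑ k ∈ Finset.Ici (⟨n - i, by omega⟩ : Fin n), (|z k| : ℝ)) ≤ 2^(n*i+1) - 2) := by
    intro i h1
    induction i, h1 using Nat.le_induction with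
    | base =>
        intro h2
        have hIoi : Finset.Ioi (⟨n - 1, by omega⟩ : Fin n) = ∅ := by
          ext k
          simp only [Finset.mem_Ioi, Finset.notMem_empty, iff_false, not_lt, Fin.le_def]
          omega
        have hzb := zbound ⟨n - 1, by omega⟩
        rw [hIoi, Finset.sum_empty, mul_zero, add_zero] at hzb
        have hb1 : |z ⟨n - 1, by omega⟩| ≤ (2:ℤ)^(n*1) := by
          have hlt : (|z ⟨n - 1, by omega⟩| : ℝ) < ((2:ℤ)^(n*1) : ℝ) + 1 := by
            push_cast
            rw [mul_one]
            linarith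
          have hlt2 : |z ⟨n - 1, by omega⟩| < (2:ℤ)^(n*1) + 1 := by exact_mod_cast hlt
          omega
        refine ⟨hb1, ?_⟩
        have hIci : Finset.Ici (⟨n - 1, by omega⟩ : Fin n) = {(⟨n - 1, by omega⟩ : Fin n)} := by
          ext k
          simp only [Finset.mem_Ici, Finset.mem_singleton, Fin.le_def, Fin.ext_iff]
          omega
        rw [hIci, Finset.sum_singleton]
        have hcast : (|z ⟨n - 1, by omega⟩| : ℝ) ≤ (2:ℝ)^(n*1) := by exact_mod_cast hb1
        have hge : (2:ℝ) ≤ 2^n := by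
          calc (2:ℝ) = 2^1 := (pow_one 2).symm
            _ ≤ 2^n := pow_le_pow_right₀ one_le_two hn
        have he1 : (2:ℝ)^(n*1) = 2^n := by rw [mul_one]
        have he2 : (2:ℝ)^(n*1+1) = 2 * 2^n := by rw [mul_one, pow_succ]; ring
        linarith
    | succ i hi ih =>
        intro h2
        have hii : i ≤ n := by omega
        obtain ⟨ihb, ihs⟩ := ih hii
        have hIoiIci : Finset.Ioi (⟨n - (i+1), by omega⟩ : Fin n)
            = Finset.Ici (⟨n - i, by omega⟩ : Fin n) := by
          ext k
          simp only [Finset.mem_Ioi, Finset.mem_Ici, Fin.lt_def, Fin.le_def]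
          omega
        have hzb := zbound ⟨n - (i+1), by omega⟩
        rw [hIoiIci] at hzb
        have hpow1 : (2:ℝ)^n ≤ 2^(n*i) :=
          pow_le_pow_right₀ one_le_two (Nat.le_mul_of_pos_right n (by omega))
        have h2e : (2:ℝ)^(n*i+1) = 2 * 2^(n*i) := by rw [pow_succ]; ring
        have h3 : (2:ℝ)^(n*i) * 2 ≤ 2^(n*(i+1)) := by
          rw [← pow_succ]
          exact pow_le_pow_right₀ one_le_two (by rw [Nat.mul_succ]; omega)
        have hreal : (|z ⟨n - (i+1), by omega⟩| : ℝ) ≤ 2^(n*(i+1)) + 1/2 := by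
          have hmul : (1/2:ℝ) * ∑ k ∈ Finset.Ici (⟨n - i, by omega⟩ : Fin n), (|z k| : ℝ)
              ≤ (1/2) * (2^(n*i+1) - 2) :=
            mul_le_mul_of_nonneg_left ihs (by norm_num)
          linarith
        have hb : |z ⟨n - (i+1), by omega⟩| ≤ (2:ℤ)^(n*(i+1)) := by
          have hlt : (|z ⟨n - (i+1), by omega⟩| : ℝ) < ((2:ℤ)^(n*(i+1)) : ℝ) + 1 := by
            push_cast
            linarith
          have hlt2 : |z ⟨n - (i+1), by omega⟩| < (2:ℤ)^(n*(i+1)) + 1 := by exact_mod_cast hlt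
          omega
        refine ⟨hb, ?_⟩
        have hsplit2 : Finset.Ici (⟨n - (i+1), by omega⟩ : Fin n)
            = insert (⟨n - (i+1), by omega⟩ : Fin n)
                (Finset.Ici (⟨n - i, by omega⟩ : Fin n)) := by
          ext k
          simp only [Finset.mem_Ici, Finset.mem_insert, Fin.le_def, Fin.ext_iff]
          omega
        have hnotmem : (⟨n - (i+1), by omega⟩ : Fin n)
            ∉ Finset.Ici (⟨n - i, by omega⟩ : Fin n) := by
          simp only [Finset.mem_Ici, Fin.le_def, not_le]
          omega
        rw [hsplit2, Finset.sum_insert hnotmem]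
        have hcast : (|z ⟨n - (i+1), by omega⟩| : ℝ) ≤ (2:ℝ)^(n*(i+1)) := by exact_mod_cast hb
        have h4 : (2:ℝ)^(n*i+1) ≤ 2^(n*(i+1)) :=
          pow_le_pow_right₀ one_le_two (by rw [Nat.mul_succ]; omega)
        have h5 : (2:ℝ)^(n*(i+1)+1) = 2^(n*(i+1)) + 2^(n*(i+1)) := by
          rw [pow_succ]; ring
        have hge2 : (2:ℝ) ≤ 2^(n*(i+1)) := by
          calc (2:ℝ) = 2^1 := (pow_one 2).symm
            _ ≤ 2^(n*(i+1)) := pow_le_pow_right₀ one_le_two (by nlinarith)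
        linarith
  exact fun i h1 h2 => (MAIN i h1 h2).1
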